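/- Let σ₁ > 0 and σ₂ > 0, and let μ₁, μ₂ be the Gaussian probability measures on ℝ with mean 0 and variances σ₁², σ₂² respectively. Then the pushforward of μ₁ ⊗ μ₂ under the map (x, y) ↦ x² + y² is absolutely continuous with respect to Lebesgue measure, with density r ↦ (1/(2σ₁σ₂))·exp(−r(σ₁² + σ₂²)/(4σ₁²σ₂²))·I₀(r(σ₁² − σ₂²)/(4σ₁²σ₂²)) for r > 0 and density 0 for r ≤ 0. -/

import Mathlib

open MeasureTheory ProbabilityTheory Real Set
open scoped ENNReal NNReal

/-- Modified Bessel function of the first kind of order 0, via its integral representation. -/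
noncomputable def besselI0 (z : ℝ) : ℝ := (1 / π) * ∫ θ in (0:ℝ)..π, Real.exp (z * Real.cos θ)

lemma besselI0_nonneg (z : ℝ) : 0 ≤ besselI0 z := by
  have h : 0 ≤ ∫ θ in (0:ℝ)..π, Real.exp (z * Real.cos θ) :=
    intervalIntegral.integral_nonneg pi_pos.le (fun x _ => (exp_pos _).le)
  have : (0:ℝ) ≤ 1 / π := by positivity
  exact mul_nonneg this h

lemma lintegral_comp_polarCoord_symm' (g : ℝ × ℝ → ℝ≥0∞) :
    ∫⁻ p in polarCoord.target, ENNReal.ofReal p.1 * g (polarCoord.symm p) = ∫⁻ p, g p := by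
  set B : ℝ × ℝ → ℝ × ℝ →L[ℝ] ℝ × ℝ := fun p =>
    LinearMap.toContinuousLinearMap (Matrix.toLin (Module.Basis.finTwoProd ℝ) (Module.Basis.finTwoProd ℝ)
      !![Real.cos p.2, -p.1 * Real.sin p.2; Real.sin p.2, p.1 * Real.cos p.2])
  have B_det : ∀ p, (B p).det = p.1 := by
    intro p
    conv_rhs => rw [← one_mul p.1, ← cos_sq_add_sin_sq p.2]
    simp only [B, neg_mul, LinearMap.det_toContinuousLinearMap, LinearMap.det_toLin,
      Matrix.det_fin_two_of, sub_neg_eq_add]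
    ring
  symm
  calc
    ∫⁻ p, g p = ∫⁻ p in polarCoord.source, g p := by
      rw [← setLIntegral_univ]
      exact (setLIntegral_congr polarCoord_source_ae_eq_univ.symm)
    _ = ∫⁻ p in polarCoord.symm '' polarCoord.target, g p := by
      rw [polarCoord.symm_image_target_eq_source]
    _ = ∫⁻ p in polarCoord.target, ENNReal.ofReal |(B p).det| * g (polarCoord.symm p) := by
      apply lintegral_image_eq_lintegral_abs_det_fderiv_mul volume
        polarCoord.open_target.measurableSet
        (fun p _ => (hasFDerivAt_polarCoord_symm p).hasFDerivWithinAt)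
        polarCoord.symm.injOn
    _ = ∫⁻ p in polarCoord.target, ENNReal.ofReal p.1 * g (polarCoord.symm p) := by
      apply setLIntegral_congr_fun polarCoord.open_target.measurableSet
      intro x hx
      dsimp only
      rw [B_det, abs_of_pos hx.1]

lemma lintegral_image_eq_lintegral_abs_deriv_mul' {s : Set ℝ} {f f' : ℝ → ℝ}
    (hs : MeasurableSet s) (hf' : ∀ x ∈ s, HasDerivWithinAt f (f' x) s x)
    (hf : InjOn f s) (g : ℝ → ℝ≥0∞) :
    ∫⁻ x in f '' s, g x = ∫⁻ x in s, ENNReal.ofReal |f' x| * g (f x) := by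
  simpa only [ContinuousLinearMap.det_toSpanSingleton] using
    lintegral_image_eq_lintegral_abs_det_fderiv_mul volume hs
      (fun x hx => (hf' x hx).hasFDerivWithinAt) hf g

lemma integral_exp_cos_pi (z : ℝ) :
    ∫ θ in (0:ℝ)..π, rexp (z * Real.cos θ) = π * besselI0 z := by
  rw [besselI0]; field_simp

lemma integral_exp_cos_two (z : ℝ) :
    ∫ θ in (-π)..π, rexp (z * Real.cos (2 * θ)) = 2 * π * besselI0 z := by
  have key0 : ∫ θ in (0:ℝ)..π, rexp (-(z * Real.cos θ)) = ∫ θ in (0:ℝ)..π, rexp (z * Real.cos θ) := by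
    have h := intervalIntegral.integral_comp_sub_left (a := 0) (b := π)
      (fun x => rexp (z * Real.cos x)) π
    simp only [sub_self, sub_zero, Real.cos_pi_sub, mul_neg] at h
    rw [← h]
  have key1 : ∫ θ in (0:ℝ)..π, rexp (z * Real.cos (2 * θ)) = π * besselI0 z := by
    have h1 : ∫ θ in (0:ℝ)..π, rexp (z * Real.cos (2 * θ))
        = (2:ℝ)⁻¹ • ∫ u in (0:ℝ)..(2*π), rexp (z * Real.cos u) := by
      rw [intervalIntegral.integral_comp_mul_left (fun u => rexp (z * Real.cos u)) two_ne_zero]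
      norm_num
    have h2 : ∫ u in (0:ℝ)..(2*π), rexp (z * Real.cos u)
        = (∫ u in (0:ℝ)..π, rexp (z * Real.cos u)) + ∫ u in π..(2*π), rexp (z * Real.cos u) := by
      rw [intervalIntegral.integral_add_adjacent_intervals] <;>
        exact (Real.continuous_exp.comp (by continuity)).intervalIntegrable _ _
    have h3 : ∫ u in π..(2*π), rexp (z * Real.cos u) = ∫ u in (0:ℝ)..π, rexp (-(z * Real.cos u)) := by
      have h := intervalIntegral.integral_comp_add_right (a := 0) (b := π)
        (fun x => rexp (z * Real.cos x)) π
      simp only [zero_add, Real.cos_add_pi, mul_neg] at h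
      rw [two_mul, ← h]
    rw [h1, h2, h3, key0, integral_exp_cos_pi, smul_eq_mul]
    ring
  have heven : ∫ θ in (-π)..(0:ℝ), rexp (z * Real.cos (2 * θ)) = ∫ θ in (0:ℝ)..π, rexp (z * Real.cos (2 * θ)) := by
    have h := intervalIntegral.integral_comp_neg (a := 0) (b := π)
      (fun x => rexp (z * Real.cos (2 * x)))
    simp only [neg_zero, mul_neg, Real.cos_neg] at h
    exact h.symm
  have hsplit : ∫ θ in (-π)..π, rexp (z * Real.cos (2 * θ))
      = (∫ θ in (-π)..(0:ℝ), rexp (z * Real.cos (2 * θ))) + ∫ θ in (0:ℝ)..π, rexp (z * Real.cos (2 * θ)) := by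
    rw [intervalIntegral.integral_add_adjacent_intervals] <;>
      exact (Real.continuous_exp.comp (by continuity)).intervalIntegrable _ _
  rw [hsplit, heven, key1]; ring

lemma inner_theta (c₁ c₂ : ℝ) :
    ∫ θ in (-π)..π, rexp (c₁ * Real.cos θ ^ 2 + c₂ * Real.sin θ ^ 2)
      = 2 * π * rexp ((c₁ + c₂) / 2) * besselI0 ((c₁ - c₂) / 2) := by
  have hpt : ∀ θ : ℝ, rexp (c₁ * Real.cos θ ^ 2 + c₂ * Real.sin θ ^ 2)
      = rexp ((c₁ + c₂) / 2) * rexp (((c₁ - c₂) / 2) * Real.cos (2 * θ)) := by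
    intro θ
    rw [← Real.exp_add]
    congr 1
    have h1 : Real.cos θ ^ 2 = 1 / 2 + Real.cos (2 * θ) / 2 := Real.cos_sq θ
    have h2 : Real.sin θ ^ 2 = 1 - Real.cos θ ^ 2 := by
      have := Real.sin_sq_add_cos_sq θ; linarith
    rw [h2, h1]; ring
  simp_rw [hpt]
  rw [intervalIntegral.integral_const_mul, integral_exp_cos_two]
  ring
lemma sq_image_Ioi : (fun r : ℝ => r ^ 2) '' Ioi 0 = Ioi 0 := by
  ext y
  constructor
  · rintro ⟨x, hx, rfl⟩; exact pow_pos (show 0 < x from hx) 2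
  · intro hy; exact ⟨Real.sqrt y, Real.sqrt_pos.2 hy, Real.sq_sqrt hy.le⟩

lemma sq_injOn_Ioi : InjOn (fun r : ℝ => r ^ 2) (Ioi 0) := fun a ha b hb h => by
  dsimp only at h
  have : |a| = |b| := by rw [← Real.sqrt_sq_eq_abs, ← Real.sqrt_sq_eq_abs, h]
  rwa [abs_of_pos ha, abs_of_pos hb] at this

variable (σ₁ σ₂ : ℝ)

/-- the density on `(0, ∞)` -/
noncomputable def fval (s : ℝ) : ℝ :=
  (1 / (2 * σ₁ * σ₂)) * rexp (-(s * (σ₁ ^ 2 + σ₂ ^ 2)) / (4 * σ₁ ^ 2 * σ₂ ^ 2)) *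
    besselI0 (s * (σ₁ ^ 2 - σ₂ ^ 2) / (4 * σ₁ ^ 2 * σ₂ ^ 2))

lemma fval_nonneg (h₁ : 0 < σ₁) (h₂ : 0 < σ₂) (s : ℝ) : 0 ≤ fval σ₁ σ₂ s := by
  have := besselI0_nonneg (s * (σ₁ ^ 2 - σ₂ ^ 2) / (4 * σ₁ ^ 2 * σ₂ ^ 2))
  have h : (0:ℝ) ≤ 1 / (2 * σ₁ * σ₂) := by positivity
  exact mul_nonneg (mul_nonneg h (exp_pos _).le) this

lemma key (hσ₁ : 0 < σ₁) (hσ₂ : 0 < σ₂) (F : ℝ → ℝ≥0∞) (hF : Measurable F) :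
    ∫⁻ p : ℝ × ℝ, F (p.1 ^ 2 + p.2 ^ 2) *
        (gaussianPDF 0 ⟨σ₁ ^ 2, sq_nonneg σ₁⟩ p.1 * gaussianPDF 0 ⟨σ₂ ^ 2, sq_nonneg σ₂⟩ p.2)
        ∂(volume.prod volume)
      = ∫⁻ s in Ioi (0:ℝ), F s * ENNReal.ofReal (fval σ₁ σ₂ s) := by
  set v₁ : ℝ≥0 := ⟨σ₁ ^ 2, sq_nonneg σ₁⟩
  set v₂ : ℝ≥0 := ⟨σ₂ ^ 2, sq_nonneg σ₂⟩
  have hv₁ : (v₁ : ℝ) = σ₁ ^ 2 := rfl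
  have hv₂ : (v₂ : ℝ) = σ₂ ^ 2 := rfl
  -- step 1 : polar coordinates
  rw [← Measure.volume_eq_prod ℝ ℝ]
  rw [← lintegral_comp_polarCoord_symm'
    (fun p => F (p.1 ^ 2 + p.2 ^ 2) * (gaussianPDF 0 v₁ p.1 * gaussianPDF 0 v₂ p.2))]
  have hsymm : ∀ p : ℝ × ℝ, polarCoord.symm p = (p.1 * Real.cos p.2, p.1 * Real.sin p.2) :=
    fun p => rfl
  -- step 2 : rewrite integrand on the target
  have step2 : ∫⁻ p in polarCoord.target, ENNReal.ofReal p.1 *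
        ((fun p : ℝ × ℝ => F (p.1 ^ 2 + p.2 ^ 2) * (gaussianPDF 0 v₁ p.1 * gaussianPDF 0 v₂ p.2))
          (polarCoord.symm p))
      = ∫⁻ p in polarCoord.target, F (p.1 ^ 2) * ENNReal.ofReal
          (p.1 * (gaussianPDFReal 0 v₁ (p.1 * Real.cos p.2) *
            gaussianPDFReal 0 v₂ (p.1 * Real.sin p.2))) := by
    apply setLIntegral_congr_fun polarCoord.open_target.measurableSet
    intro p hp
    dsimp only
    rw [hsymm p]
    dsimp only
    have harg : (p.1 * Real.cos p.2) ^ 2 + (p.1 * Real.sin p.2) ^ 2 = p.1 ^ 2 := by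
      linear_combination p.1 ^ 2 * (Real.sin_sq_add_cos_sq p.2)
    rw [harg, gaussianPDF, gaussianPDF, ← ENNReal.ofReal_mul (gaussianPDFReal_nonneg _ _ _),
      ENNReal.ofReal_mul (le_of_lt hp.1), mul_left_comm]
  rw [step2]
  -- step 3 : Tonelli on the product set
  have htarget : polarCoord.target = Ioi (0:ℝ) ×ˢ Ioo (-π) π := rfl
  rw [htarget, Measure.volume_eq_prod ℝ ℝ, ← Measure.prod_restrict, lintegral_prod _ (by
    apply Measurable.aemeasurable
    apply Measurable.mul
    · exact hF.comp (measurable_fst.pow_const 2)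
    · apply Measurable.ennreal_ofReal
      apply Measurable.mul measurable_fst
      exact ((measurable_gaussianPDFReal 0 v₁).comp
          (measurable_fst.mul (Real.measurable_cos.comp measurable_snd))).mul
        ((measurable_gaussianPDFReal 0 v₂).comp
          (measurable_fst.mul (Real.measurable_sin.comp measurable_snd))))]
  -- step 4 : inner integral evaluation
  have step4 : ∫⁻ r in Ioi (0:ℝ), (∫⁻ θ in Ioo (-π) π, F (r ^ 2) * ENNReal.ofReal
        (r * (gaussianPDFReal 0 v₁ (r * Real.cos θ) * gaussianPDFReal 0 v₂ (r * Real.sin θ))))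
      = ∫⁻ r in Ioi (0:ℝ), ENNReal.ofReal |2 * r| * (F (r ^ 2) * ENNReal.ofReal (fval σ₁ σ₂ (r ^ 2))) := by
    apply setLIntegral_congr_fun measurableSet_Ioi
    intro r hr
    dsimp only
    rw [lintegral_const_mul _ (by
      apply Measurable.ennreal_ofReal
      exact (measurable_const.mul (((measurable_gaussianPDFReal 0 v₁).comp
        ((measurable_const.mul Real.measurable_cos))).mul
        ((measurable_gaussianPDFReal 0 v₂).comp (measurable_const.mul Real.measurable_sin)))))]
    have hIoo : ∫⁻ θ in Ioo (-π) π, ENNReal.ofReal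
          (r * (gaussianPDFReal 0 v₁ (r * Real.cos θ) * gaussianPDFReal 0 v₂ (r * Real.sin θ)))
        = ENNReal.ofReal (∫ θ in (-π)..π,
            r * (gaussianPDFReal 0 v₁ (r * Real.cos θ) * gaussianPDFReal 0 v₂ (r * Real.sin θ))) := by
      have hcont : Continuous (fun θ : ℝ =>
          r * (gaussianPDFReal 0 v₁ (r * Real.cos θ) * gaussianPDFReal 0 v₂ (r * Real.sin θ))) := by
        simp only [gaussianPDFReal]
        continuity
      rw [setLIntegral_congr (Ioo_ae_eq_Ioc (a := -π) (b := π) (μ := volume)),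
        intervalIntegral.integral_of_le (by linarith [pi_pos] : -π ≤ π),
        ← ofReal_integral_eq_lintegral_ofReal
          (hcont.integrableOn_Ioc)
          (Filter.Eventually.of_forall fun θ => mul_nonneg (le_of_lt hr)
            (mul_nonneg (gaussianPDFReal_nonneg _ _ _) (gaussianPDFReal_nonneg _ _ _)))]
    rw [hIoo]
    have hs0 : √(2*π) ≠ 0 := by positivity
    have hval : ∫ θ in (-π)..π,
          r * (gaussianPDFReal 0 v₁ (r * Real.cos θ) * gaussianPDFReal 0 v₂ (r * Real.sin θ))
        = 2 * r * fval σ₁ σ₂ (r ^ 2) := by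
      have hσ₁' : σ₁ ≠ 0 := ne_of_gt hσ₁
      have hσ₂' : σ₂ ≠ 0 := ne_of_gt hσ₂
      have hpt : ∀ θ : ℝ,
          r * (gaussianPDFReal 0 v₁ (r * Real.cos θ) * gaussianPDFReal 0 v₂ (r * Real.sin θ))
          = (r * ((√(2*π) * σ₁)⁻¹ * (√(2*π) * σ₂)⁻¹)) *
            rexp ((-r^2/(2*σ₁^2)) * Real.cos θ ^ 2 + (-r^2/(2*σ₂^2)) * Real.sin θ ^ 2) := by
        intro θ
        have hsq1 : √(2*π*(v₁:ℝ)) = √(2*π) * σ₁ := by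
          rw [hv₁, Real.sqrt_mul (by positivity), Real.sqrt_sq hσ₁.le]
        have hsq2 : √(2*π*(v₂:ℝ)) = √(2*π) * σ₂ := by
          rw [hv₂, Real.sqrt_mul (by positivity), Real.sqrt_sq hσ₂.le]
        have he : rexp (-(r * Real.cos θ - 0)^2/(2*(v₁:ℝ))) * rexp (-(r * Real.sin θ - 0)^2/(2*(v₂:ℝ)))
            = rexp ((-r^2/(2*σ₁^2)) * Real.cos θ ^ 2 + (-r^2/(2*σ₂^2)) * Real.sin θ ^ 2) := by
          rw [← Real.exp_add]
          congr 1
          rw [hv₁, hv₂]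
          field_simp
          ring
        simp only [gaussianPDFReal, hsq1, hsq2]
        calc r * (((√(2*π) * σ₁)⁻¹ * rexp (-(r * Real.cos θ - 0)^2/(2*(v₁:ℝ)))) *
              ((√(2*π) * σ₂)⁻¹ * rexp (-(r * Real.sin θ - 0)^2/(2*(v₂:ℝ)))))
            = (r * ((√(2*π) * σ₁)⁻¹ * (√(2*π) * σ₂)⁻¹)) *
              (rexp (-(r * Real.cos θ - 0)^2/(2*(v₁:ℝ))) * rexp (-(r * Real.sin θ - 0)^2/(2*(v₂:ℝ)))) := by
              ring
          _ = _ := by rw [he]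
      simp_rw [hpt]
      rw [intervalIntegral.integral_const_mul, inner_theta]
      have hA : ((-r^2/(2*σ₁^2)) + (-r^2/(2*σ₂^2))) / 2 = -(r^2 * (σ₁^2 + σ₂^2)) / (4*σ₁^2*σ₂^2) := by
        field_simp; ring
      have hB : ((-r^2/(2*σ₁^2)) - (-r^2/(2*σ₂^2))) / 2 = r^2 * (σ₁^2 - σ₂^2) / (4*σ₁^2*σ₂^2) := by
        field_simp; ring
      rw [hA, hB, fval]
      rw [show (2:ℝ) * π = √(2*π) * √(2*π) from (Real.mul_self_sqrt (by positivity)).symm]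
      field_simp
      ring_nf
      rw [Real.sqrt_sq (Real.sqrt_nonneg _)]
      ring
    rw [hval, abs_of_pos (by linarith [mem_Ioi.mp hr] : (0:ℝ) < 2*r),
      ENNReal.ofReal_mul (by linarith [mem_Ioi.mp hr] : (0:ℝ) ≤ 2*r), mul_left_comm]
  rw [step4, ← lintegral_image_eq_lintegral_abs_deriv_mul' (f := fun r : ℝ => r ^ 2)
      (f' := fun r : ℝ => 2 * r) measurableSet_Ioi
      (fun x _ => by simpa using (hasDerivAt_pow 2 x).hasDerivWithinAt)
      sq_injOn_Ioi (fun s => F s * ENNReal.ofReal (fval σ₁ σ₂ s)), sq_image_Ioi]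

lemma gaussian_prod (v₁ v₂ : ℝ≥0) (h₁ : v₁ ≠ 0) (h₂ : v₂ ≠ 0) :
    (gaussianReal 0 v₁).prod (gaussianReal 0 v₂) =
      (volume.prod volume).withDensity
        (fun z : ℝ × ℝ => gaussianPDF 0 v₁ z.1 * gaussianPDF 0 v₂ z.2) := by
  refine Measure.prod_eq fun s t hs ht => ?_
  rw [withDensity_apply _ (hs.prod ht), ← Measure.prod_restrict,
    lintegral_prod_mul (measurable_gaussianPDF 0 v₁).aemeasurable
      (measurable_gaussianPDF 0 v₂).aemeasurable,
    gaussianReal_of_var_ne_zero _ h₁, gaussianReal_of_var_ne_zero _ h₂,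
    withDensity_apply _ hs, withDensity_apply _ ht]

theorem squared_hoyt_density
    (σ₁ σ₂ : ℝ) (hσ₁ : 0 < σ₁) (hσ₂ : 0 < σ₂)
    (μ₁ μ₂ : Measure ℝ)
    (hμ₁ : μ₁ = gaussianReal 0 ⟨σ₁ ^ 2, sq_nonneg σ₁⟩)
    (hμ₂ : μ₂ = gaussianReal 0 ⟨σ₂ ^ 2, sq_nonneg σ₂⟩)
    (fR : ℝ → ℝ)
    (hfR : ∀ r : ℝ, fR r =
      if 0 < r then
        (1 / (2 * σ₁ * σ₂)) * Real.exp (-(r * (σ₁ ^ 2 + σ₂ ^ 2)) / (4 * σ₁ ^ 2 * σ₂ ^ 2)) *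
          besselI0 (r * (σ₁ ^ 2 - σ₂ ^ 2) / (4 * σ₁ ^ 2 * σ₂ ^ 2))
      else 0) :
    Measure.map (fun p : ℝ × ℝ => p.1 ^ 2 + p.2 ^ 2) (μ₁.prod μ₂) =
      volume.withDensity (fun r => ENNReal.ofReal (fR r)) := by
  subst hμ₁ hμ₂
  set v₁ : ℝ≥0 := ⟨σ₁ ^ 2, sq_nonneg σ₁⟩ with hv₁def
  set v₂ : ℝ≥0 := ⟨σ₂ ^ 2, sq_nonneg σ₂⟩ with hv₂def
  have h₁ : v₁ ≠ 0 := by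
    intro h
    exact (pow_ne_zero 2 (ne_of_gt hσ₁)) (congrArg NNReal.toReal h)
  have h₂ : v₂ ≠ 0 := by
    intro h
    exact (pow_ne_zero 2 (ne_of_gt hσ₂)) (congrArg NNReal.toReal h)
  have hT : Measurable fun p : ℝ × ℝ => p.1 ^ 2 + p.2 ^ 2 :=
    (measurable_fst.pow_const 2).add (measurable_snd.pow_const 2)
  ext A hA
  rw [Measure.map_apply hT hA, gaussian_prod v₁ v₂ h₁ h₂, withDensity_apply _ (hT hA),
    withDensity_apply _ hA]
  have hind : ∫⁻ p in (fun p : ℝ × ℝ => p.1 ^ 2 + p.2 ^ 2) ⁻¹' A,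
        gaussianPDF 0 v₁ p.1 * gaussianPDF 0 v₂ p.2 ∂(volume.prod volume)
      = ∫⁻ p : ℝ × ℝ, (A.indicator (1 : ℝ → ℝ≥0∞)) (p.1 ^ 2 + p.2 ^ 2) *
          (gaussianPDF 0 v₁ p.1 * gaussianPDF 0 v₂ p.2) ∂(volume.prod volume) := by
    rw [← lintegral_indicator (hT hA) _]
    congr 1
    ext p
    by_cases h : p.1 ^ 2 + p.2 ^ 2 ∈ A
    · rw [Set.indicator_of_mem h, Set.indicator_of_mem
          (show p ∈ (fun p : ℝ × ℝ => p.1 ^ 2 + p.2 ^ 2) ⁻¹' A from h), Pi.one_apply, one_mul]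
    · rw [Set.indicator_of_notMem h, Set.indicator_of_notMem
          (show p ∉ (fun p : ℝ × ℝ => p.1 ^ 2 + p.2 ^ 2) ⁻¹' A from h), zero_mul]
  rw [hind, key σ₁ σ₂ hσ₁ hσ₂ (A.indicator (1 : ℝ → ℝ≥0∞)) (measurable_one.indicator hA)]
  rw [← lintegral_indicator measurableSet_Ioi _, ← lintegral_indicator hA _]
  congr 1
  ext r
  by_cases h0 : r ∈ Ioi 0 <;> by_cases hA' : r ∈ A
  · rw [Set.indicator_of_mem h0, Set.indicator_of_mem hA', Set.indicator_of_mem hA',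
      Pi.one_apply, one_mul, hfR r, if_pos (mem_Ioi.mp h0)]
    rfl
  · rw [Set.indicator_of_mem h0, Set.indicator_of_notMem hA', Set.indicator_of_notMem hA',
      zero_mul]
  · rw [Set.indicator_of_notMem h0, Set.indicator_of_mem hA', hfR r,
      if_neg (fun hc => h0 (mem_Ioi.mpr hc)), ENNReal.ofReal_zero]
  · rw [Set.indicator_of_notMem h0, Set.indicator_of_notMem hA']
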